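/- arXiv:1401.3891 — 5 statements merged into one kernel-verified Lean document; each statement's English description precedes it below -/
import Mathlib

section
/- Carleman's principle (comparison form). Let d ≥ 2, let G ⊆ G' be bounded open subsets of ℝ^d, and let A ⊆ ∂G ∩ ∂G' be a subset of their common boundary. Let u be continuous on the closure of G and twice continuously differentiable with vanishing Laplacian on G, with u ≤ 1 on A and u = 0 on ∂G \ A. Let v be continuous on the closure of G' and twice continuously differentiable with vanishing Laplacian on G', with v ≥ 0 on the closure of G' and v = 1 on A. Then u ≤ v everywhere on G. (Interpreting u(x) = ω_G(x, A) and v(x) = ω_{G'}(x, A) as harmonic measures, this states that the harmonic measure of a boundary portion A increases when the region is enlarged by modifying the complementary part of the boundary: ω_G(x, A) ≤ ω_{G'}(x, A).) -/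
open Filter Topology Set

section helpers

/-- If `f` is differentiable near `y`, has a local max at `y`, and its directional
derivative function along `e` is differentiable at `y`, then the second directional
derivative along `e` at `y` is nonpositive. -/
lemma second_deriv_nonpos {E : Type*} [NormedAddCommGroup E] [NormedSpace ℝ E]
    {f : E → ℝ} {y : E} (hf : ∀ᶠ z in 𝓝 y, DifferentiableAt ℝ f z)
    (hmax : IsLocalMax f y) (e : E)
    (hφ : DifferentiableAt ℝ (fun z => fderiv ℝ f z e) y) :
    fderiv ℝ (fun z => fderiv ℝ f z e) y e ≤ 0 := by
  by_contra hc
  push_neg at hc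
  set φ : E → ℝ := fun z => fderiv ℝ f z e with hφdef
  set c : ℝ := fderiv ℝ φ y e with hcdef
  set L : ℝ → E := fun t => y + t • e with hLdef
  have hL0 : L 0 = y := by simp [hLdef]
  have HL : ∀ t : ℝ, HasDerivAt L e t := by
    intro t
    simpa [hLdef] using ((hasDerivAt_id t).smul_const e).const_add y
  have hLtend : Tendsto L (𝓝 0) (𝓝 y) := by
    have hc : Continuous L := by continuity
    have := hc.continuousAt (x := (0:ℝ))
    rwa [ContinuousAt, hL0] at this
  set g : ℝ → ℝ := fun t => f (L t) with hgdef
  have hU : ∀ᶠ t in 𝓝 (0:ℝ), DifferentiableAt ℝ f (L t) := hLtend.eventually hf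
  have hg' : ∀ᶠ t in 𝓝 (0:ℝ), HasDerivAt g (fderiv ℝ f (L t) e) t :=
    hU.mono fun t ht => ht.hasFDerivAt.comp_hasDerivAt t (HL t)
  have hderiv : ∀ᶠ t in 𝓝 (0:ℝ), deriv g t = φ (L t) :=
    hg'.mono fun t ht => ht.deriv
  have hgmax : IsLocalMax g 0 := by
    have := hLtend.eventually hmax
    simpa [IsLocalMax, IsMaxFilter, hgdef, hL0] using this
  have hg0 : deriv g 0 = 0 := hgmax.deriv_eq_zero
  have H2 : HasDerivAt (deriv g) c 0 := by
    have h0 : HasFDerivAt φ (fderiv ℝ φ y) (L 0) := by rw [hL0]; exact hφ.hasFDerivAt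
    have h1 : HasDerivAt (φ ∘ L) (fderiv ℝ φ y e) 0 := h0.comp_hasDerivAt 0 (HL 0)
    exact h1.congr_of_eventuallyEq hderiv
  rw [hasDerivAt_iff_tendsto_slope] at H2
  have hpos : ∀ᶠ t in 𝓝[>] (0:ℝ), 0 < deriv g t := by
    have h1 : ∀ᶠ t in 𝓝[≠] (0:ℝ), 0 < slope (deriv g) 0 t :=
      H2.eventually (eventually_gt_nhds hc)
    have h2 : ∀ᶠ t in 𝓝[>] (0:ℝ), 0 < slope (deriv g) 0 t :=
      h1.filter_mono (nhdsWithin_mono 0 (fun t ht => ne_of_gt ht))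
    filter_upwards [h2, self_mem_nhdsWithin] with t ht ht'
    have htne : (t:ℝ) ≠ 0 := ne_of_gt ht'
    have : deriv g t = slope (deriv g) 0 t * t := by
      rw [slope_def_field, hg0, sub_zero, sub_zero, div_mul_cancel₀ _ htne]
    rw [this]
    exact mul_pos ht ht'
  obtain ⟨δ₁, hδ₁, hIoo⟩ := mem_nhdsGT_iff_exists_Ioo_subset.mp hpos
  obtain ⟨δ₂, hδ₂, hU2⟩ := Metric.eventually_nhds_iff.mp hU
  obtain ⟨δ₃, hδ₃, hM3⟩ := Metric.eventually_nhds_iff.mp hgmax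
  set δ : ℝ := min δ₁ (min δ₂ δ₃ / 2) with hδdef
  have hδpos : 0 < δ := lt_min hδ₁ (by positivity)
  have hδle₁ : δ ≤ δ₁ := min_le_left _ _
  have haux : δ ≤ min δ₂ δ₃ / 2 := min_le_right _ _
  have haux2 : min δ₂ δ₃ ≤ δ₂ := min_le_left _ _
  have haux3 : min δ₂ δ₃ ≤ δ₃ := min_le_right _ _
  have hδlt₂ : δ < δ₂ := by linarith
  have hδlt₃ : δ < δ₃ := by linarith
  have hcont : ContinuousOn g (Icc 0 δ) := by
    intro t ht
    have h : DifferentiableAt ℝ f (L t) := by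
      apply hU2
      rw [Real.dist_eq, sub_zero, abs_of_nonneg ht.1]
      exact lt_of_le_of_lt ht.2 hδlt₂
    exact ((h.hasFDerivAt.comp_hasDerivAt t (HL t)).differentiableAt).continuousAt.continuousWithinAt
  have hmono : StrictMonoOn g (Icc 0 δ) := by
    apply strictMonoOn_of_deriv_pos (convex_Icc 0 δ) hcont
    intro t ht
    rw [interior_Icc] at ht
    exact hIoo ⟨ht.1, lt_of_lt_of_le ht.2 hδle₁⟩ 
  have h1 : g 0 < g δ := hmono (left_mem_Icc.mpr hδpos.le) (right_mem_Icc.mpr hδpos.le) hδpos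
  have h2 : g δ ≤ g 0 := by
    have := hM3 (y := δ) (by rw [Real.dist_eq, sub_zero, abs_of_nonneg hδpos.le]; exact hδlt₃)
    simpa [hgdef, hL0] using this
  linarith


/-- If `f` is `C²` on an open set `K` then the directional derivative function
along `e` is differentiable at each point of `K`. -/
lemma diff_fderiv_apply {E : Type*} [NormedAddCommGroup E] [NormedSpace ℝ E]
    {f : E → ℝ} {K : Set E} (hK : IsOpen K) (hf : ContDiffOn ℝ 2 f K)
    {x : E} (hx : x ∈ K) (e : E) :
    DifferentiableAt ℝ (fun y => fderiv ℝ f y e) x := by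
  have h := (hf.contDiffAt (hK.mem_nhds hx)).fderiv_right (m := 1) (by norm_num)
  have hd : DifferentiableAt ℝ (fderiv ℝ f) x := h.differentiableAt one_ne_zero
  exact (ContinuousLinearMap.apply ℝ ℝ e).differentiableAt.comp x hd

/-- A continuous function on the closure of a bounded open set with no interior
local maximum attains, at each interior point, a value bounded by some frontier value. -/
lemma exists_frontier_max {E : Type*} [NormedAddCommGroup E] [NormedSpace ℝ E]
    [ProperSpace E] {f : E → ℝ} {K : Set E} (hK : IsOpen K)
    (hKb : Bornology.IsBounded K) (hf : ContinuousOn f (closure K))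
    (hno : ∀ y ∈ K, ¬ IsLocalMax f y) {x : E} (hx : x ∈ K) :
    ∃ y ∈ frontier K, f x ≤ f y := by
  have hcpt : IsCompact (closure K) :=
    Metric.isCompact_of_isClosed_isBounded isClosed_closure hKb.closure
  obtain ⟨y, hy, hmax⟩ := hcpt.exists_isMaxOn ⟨x, subset_closure hx⟩ hf
  by_cases hyK : y ∈ K
  · exact absurd (Filter.eventually_of_mem (hK.mem_nhds hyK)
      (fun z hz => hmax (subset_closure hz))) (hno y hyK)
  · exact ⟨y, by rw [hK.frontier_eq]; exact ⟨hy, hyK⟩, hmax (subset_closure hx)⟩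

end helpers

/-- **Carleman's principle (comparison form).**
Let `G ⊆ G'` be bounded open subsets of `ℝ^d` (`d ≥ 2`) and `A` a subset of their
common boundary. If `u` is continuous on `closure G`, harmonic (`C²` with vanishing
Laplacian) on `G`, with `u ≤ 1` on `A` and `u = 0` on `∂G \ A`, and `v` is continuous
on `closure G'`, harmonic on `G'`, nonnegative on `closure G'` and equal to `1` on `A`,
then `u ≤ v` on `G`. Interpreting `u = ω_G(·, A)` and `v = ω_{G'}(·, A)` as harmonic
measures, the harmonic measure of `A` increases when the domain is enlarged. -/
theorem carleman_principle
    (d : ℕ) (hd : 2 ≤ d)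
    (G G' : Set (EuclideanSpace ℝ (Fin d)))
    (hG : IsOpen G) (hG' : IsOpen G')
    (hGbdd : Bornology.IsBounded G) (hG'bdd : Bornology.IsBounded G')
    (hGG' : G ⊆ G')
    (A : Set (EuclideanSpace ℝ (Fin d))) (hA : A ⊆ frontier G ∩ frontier G')
    (u v : EuclideanSpace ℝ (Fin d) → ℝ)
    (hu_cont : ContinuousOn u (closure G))
    (hu_smooth : ContDiffOn ℝ 2 u G)
    (hu_harm : ∀ x ∈ G, ∑ i : Fin d,
      fderiv ℝ (fun y => fderiv ℝ u y (EuclideanSpace.single i 1)) x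
        (EuclideanSpace.single i 1) = 0)
    (hu_le : ∀ x ∈ A, u x ≤ 1)
    (hu_zero : ∀ x ∈ frontier G \ A, u x = 0)
    (hv_cont : ContinuousOn v (closure G'))
    (hv_smooth : ContDiffOn ℝ 2 v G')
    (hv_harm : ∀ x ∈ G', ∑ i : Fin d,
      fderiv ℝ (fun y => fderiv ℝ v y (EuclideanSpace.single i 1)) x
        (EuclideanSpace.single i 1) = 0)
    (hv_nonneg : ∀ x ∈ closure G', 0 ≤ v x)
    (hv_one : ∀ x ∈ A, v x = 1) :
    ∀ x ∈ G, u x ≤ v x := by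
  intro x hx
  have hGsubcl : closure G ⊆ closure G' := closure_mono hGG'
  set i0 : Fin d := ⟨0, by omega⟩ with hi0
  set P : EuclideanSpace ℝ (Fin d) →L[ℝ] ℝ := EuclideanSpace.proj i0 with hP
  set e : Fin d → EuclideanSpace ℝ (Fin d) := fun i => EuclideanSpace.single i 1 with he
  -- bound on the perturbation over the closure of G
  obtain ⟨r, hr⟩ := hGbdd.subset_closedBall 0
  have hrcl : closure G ⊆ Metric.closedBall 0 r := closure_minimal hr Metric.isClosed_closedBall
  set M : ℝ := r ^ 2 + 1 with hM
  have hq_bound : ∀ z ∈ closure G, (P z) ^ 2 ≤ M := by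
    intro z hz
    have h1 : ‖z‖ ≤ r := by simpa using hrcl hz
    have h2 : |P z| ≤ ‖z‖ := by
      have : P z = (inner ℝ (EuclideanSpace.single i0 (1:ℝ)) z : ℝ) := by
        simp [hP, EuclideanSpace.inner_single_left]
      rw [this]
      calc |(inner ℝ (EuclideanSpace.single i0 (1:ℝ)) z : ℝ)|
          ≤ ‖EuclideanSpace.single i0 (1:ℝ)‖ * ‖z‖ := abs_real_inner_le_norm _ _
        _ = ‖z‖ := by simp [EuclideanSpace.norm_single]
    have h3 : |P z| ≤ r := h2.trans h1
    have h4 : (P z) ^ 2 ≤ r ^ 2 := by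
      rw [← sq_abs]
      exact pow_le_pow_left₀ (abs_nonneg _) h3 2
    linarith
  have hM0 : 0 < M := by positivity
  -- main estimate for each ε > 0
  have key : ∀ ε : ℝ, 0 < ε → u x - v x ≤ ε * M := by
    intro ε hε
    set f : EuclideanSpace ℝ (Fin d) → ℝ := fun z => u z - v z + ε * (P z) ^ 2 with hf
    have hfcont : ContinuousOn f (closure G) := by
      apply ContinuousOn.add
      · exact hu_cont.sub (hv_cont.mono hGsubcl)
      · exact (continuous_const.mul ((P.continuous.pow 2))).continuousOn
    -- no interior local maximum
    have hno : ∀ y ∈ G, ¬ IsLocalMax f y := by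
      intro y hy hmax
      -- differentiability of f near y
      have hf_ev : ∀ᶠ z in 𝓝 y, DifferentiableAt ℝ f z := by
        filter_upwards [hG.mem_nhds hy] with z hz
        have hu_d : DifferentiableAt ℝ u z :=
          (hu_smooth.contDiffAt (hG.mem_nhds hz)).differentiableAt two_ne_zero
        have hv_d : DifferentiableAt ℝ v z :=
          (hv_smooth.contDiffAt (hG'.mem_nhds (hGG' hz))).differentiableAt two_ne_zero
        exact (hu_d.sub hv_d).add ((P.differentiableAt.pow 2).const_mul ε)
      -- second directional derivatives
      have hterm : ∀ i : Fin d,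
          fderiv ℝ (fun z => fderiv ℝ u z (e i)) y (e i)
            - fderiv ℝ (fun z => fderiv ℝ v z (e i)) y (e i)
            + ε * (2 * P (e i) * P (e i)) ≤ 0 := by
        intro i
        set c : ℝ := P (e i) with hc
        -- the directional derivative of f along `e i` agrees near y with an explicit function
        have heq : (fun z => fderiv ℝ f z (e i)) =ᶠ[𝓝 y]
            (fun z => fderiv ℝ u z (e i) - fderiv ℝ v z (e i) + (ε * (2 * c)) * P z) := by
          filter_upwards [hG.mem_nhds hy] with z hz
          have hu_d : DifferentiableAt ℝ u z :=
            (hu_smooth.contDiffAt (hG.mem_nhds hz)).differentiableAt two_ne_zero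
          have hv_d : DifferentiableAt ℝ v z :=
            (hv_smooth.contDiffAt (hG'.mem_nhds (hGG' hz))).differentiableAt two_ne_zero
          have hq : HasFDerivAt (fun w => (P w) ^ 2)
              (((2:ℝ) * P z ^ 1) • (P : EuclideanSpace ℝ (Fin d) →L[ℝ] ℝ)) z :=
            (hasDerivAt_pow 2 (P z)).comp_hasFDerivAt z P.hasFDerivAt
          have htot : HasFDerivAt f
              ((fderiv ℝ u z - fderiv ℝ v z) + ε • (((2:ℝ) * P z ^ 1) • (P : EuclideanSpace ℝ (Fin d) →L[ℝ] ℝ))) z :=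
            (hu_d.hasFDerivAt.sub hv_d.hasFDerivAt).add (hq.const_mul ε)
          have := htot.fderiv
          rw [this]
          simp only [ContinuousLinearMap.add_apply, ContinuousLinearMap.sub_apply,
            ContinuousLinearMap.smul_apply, smul_eq_mul, pow_one]
          ring
        -- differentiability of the explicit function at y
        have hφu : DifferentiableAt ℝ (fun z => fderiv ℝ u z (e i)) y :=
          diff_fderiv_apply hG hu_smooth hy (e i)
        have hφv : DifferentiableAt ℝ (fun z => fderiv ℝ v z (e i)) y :=
          diff_fderiv_apply hG' hv_smooth (hGG' hy) (e i)
        have hsum : HasFDerivAt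
            (fun z => fderiv ℝ u z (e i) - fderiv ℝ v z (e i) + (ε * (2 * c)) * P z)
            ((fderiv ℝ (fun z => fderiv ℝ u z (e i)) y
              - fderiv ℝ (fun z => fderiv ℝ v z (e i)) y)
              + (ε * (2 * c)) • (P : EuclideanSpace ℝ (Fin d) →L[ℝ] ℝ)) y :=
          (hφu.hasFDerivAt.sub hφv.hasFDerivAt).add (P.hasFDerivAt.const_mul _)
        have hd2 : fderiv ℝ (fun z => fderiv ℝ f z (e i)) y (e i)
            = fderiv ℝ (fun z => fderiv ℝ u z (e i)) y (e i)
              - fderiv ℝ (fun z => fderiv ℝ v z (e i)) y (e i) + ε * (2 * c * c) := by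
          rw [heq.fderiv_eq, hsum.fderiv]
          simp only [ContinuousLinearMap.add_apply, ContinuousLinearMap.sub_apply,
            ContinuousLinearMap.smul_apply, smul_eq_mul]
          ring
        have hφf : DifferentiableAt ℝ (fun z => fderiv ℝ f z (e i)) y := by
          apply DifferentiableAt.congr_of_eventuallyEq _ heq
          exact (hφu.sub hφv).add (P.differentiableAt.const_mul _)
        have := second_deriv_nonpos hf_ev hmax (e i) hφf
        rw [hd2] at this
        calc fderiv ℝ (fun z => fderiv ℝ u z (e i)) y (e i)
            - fderiv ℝ (fun z => fderiv ℝ v z (e i)) y (e i) + ε * (2 * P (e i) * P (e i))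
            = fderiv ℝ (fun z => fderiv ℝ u z (e i)) y (e i)
              - fderiv ℝ (fun z => fderiv ℝ v z (e i)) y (e i) + ε * (2 * c * c) := by ring
          _ ≤ 0 := this
      -- sum over all directions gives a contradiction
      have hsum_le : (∑ i : Fin d,
          (fderiv ℝ (fun z => fderiv ℝ u z (e i)) y (e i)
            - fderiv ℝ (fun z => fderiv ℝ v z (e i)) y (e i)
            + ε * (2 * P (e i) * P (e i)))) ≤ 0 :=
        Finset.sum_nonpos fun i _ => hterm i
      have hPe : ∀ i : Fin d, P (e i) = if i = i0 then 1 else 0 := by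
        intro i
        simp [hP, he, EuclideanSpace.single_apply]
        by_cases h : i = i0 <;> simp [h, eq_comm]
      have hsum_eq : (∑ i : Fin d,
          (fderiv ℝ (fun z => fderiv ℝ u z (e i)) y (e i)
            - fderiv ℝ (fun z => fderiv ℝ v z (e i)) y (e i)
            + ε * (2 * P (e i) * P (e i)))) = 2 * ε := by
        rw [Finset.sum_add_distrib, Finset.sum_sub_distrib]
        have h1 := hu_harm y hy
        have h2 := hv_harm y (hGG' hy)
        rw [show (∑ i : Fin d, fderiv ℝ (fun z => fderiv ℝ u z (e i)) y (e i)) = 0 from h1,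
          show (∑ i : Fin d, fderiv ℝ (fun z => fderiv ℝ v z (e i)) y (e i)) = 0 from h2]
        have hterm' : ∀ i : Fin d, ε * (2 * P (e i) * P (e i)) = if i = i0 then 2 * ε else 0 := by
          intro i
          rw [hPe i]
          by_cases h : i = i0 <;> simp [h] <;> ring
        have : (∑ i : Fin d, ε * (2 * P (e i) * P (e i))) = 2 * ε := by
          simp only [hterm']
          rw [Finset.sum_ite_eq' Finset.univ i0]
          simp
        rw [this]; ring
      rw [hsum_eq] at hsum_le
      linarith
    -- compare with frontier values
    obtain ⟨y, hyF, hxy⟩ := exists_frontier_max hG hGbdd hfcont hno hx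
    have hyCl : y ∈ closure G := frontier_subset_closure hyF
    have hbd : u y - v y ≤ 0 := by
      by_cases hyA : y ∈ A
      · have := hu_le y hyA
        have := hv_one y hyA
        linarith
      · have h1 : u y = 0 := hu_zero y ⟨hyF, hyA⟩
        have h2 : 0 ≤ v y := hv_nonneg y (hGsubcl hyCl)
        linarith
    have h1 : f x ≤ f y := hxy
    have h2 : u y - v y + ε * (P y) ^ 2 ≤ ε * M := by
      have h4 := hq_bound y hyCl
      have h5 : ε * (P y) ^ 2 ≤ ε * M := by nlinarith
      linarith
    have h3 : 0 ≤ ε * (P x) ^ 2 := by positivity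
    simp only [hf] at h1
    linarith
  -- let ε → 0
  have : ∀ ε : ℝ, 0 < ε → u x - v x ≤ ε := by
    intro ε hε
    have := key (ε / M) (by positivity)
    calc u x - v x ≤ ε / M * M := this
      _ = ε := by field_simp
  have hle : u x - v x ≤ 0 := le_of_forall_pos_le_add (fun ε hε => by
    have := this ε hε; linarith)
  linarith
end

section
/- Let L ≥ 0, let v_0, …, v_L and w_0, …, w_L be positive real numbers, and let ε > 0. Then for every choice of positive real numbers M_0, …, M_L satisfying the constraint ∑_{ℓ=0}^L v_ℓ/M_ℓ ≤ ε², the total work satisfies ∑_{ℓ=0}^L M_ℓ·w_ℓ ≥ ε^{−2} · (∑_{ℓ=0}^L √(v_ℓ·w_ℓ))². -/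
/-- **Lower bound for the multilevel Monte Carlo work.**
For positive level variances `v ℓ`, costs per sample `w ℓ` and sample numbers `M ℓ`
subject to the sampling-error constraint `∑ ℓ, v ℓ / M ℓ ≤ ε²`, the total work
satisfies `∑ ℓ, M ℓ · w ℓ ≥ ε⁻² · (∑ ℓ, √(v ℓ · w ℓ))²`. -/
theorem mlmc_work_lower_bound
    (L : ℕ) (v w : Fin (L + 1) → ℝ)
    (hv : ∀ ℓ, 0 < v ℓ) (hw : ∀ ℓ, 0 < w ℓ)
    (ε : ℝ) (hε : 0 < ε)
    (M : Fin (L + 1) → ℝ) (hM : ∀ ℓ, 0 < M ℓ)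
    (hconstraint : ∑ ℓ, v ℓ / M ℓ ≤ ε ^ 2) :
    ε⁻¹ ^ 2 * (∑ ℓ, Real.sqrt (v ℓ * w ℓ)) ^ 2 ≤ ∑ ℓ, M ℓ * w ℓ := by
  have hwork : 0 ≤ ∑ ℓ, M ℓ * w ℓ :=
    Finset.sum_nonneg fun ℓ _ => (mul_pos (hM ℓ) (hw ℓ)).le
  have hcs : (∑ ℓ, Real.sqrt (v ℓ * w ℓ)) ^ 2 ≤
      (∑ ℓ, v ℓ / M ℓ) * ∑ ℓ, M ℓ * w ℓ := by
    refine Finset.sum_sq_le_sum_mul_sum_of_sq_eq_mul _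
      (fun ℓ _ => (div_pos (hv ℓ) (hM ℓ)).le)
      (fun ℓ _ => (mul_pos (hM ℓ) (hw ℓ)).le) (fun ℓ _ => ?_)
    rw [Real.sq_sqrt (mul_pos (hv ℓ) (hw ℓ)).le]
    rw [div_mul_eq_mul_div, eq_div_iff (hM ℓ).ne']; ring
  have h2 : (∑ ℓ, Real.sqrt (v ℓ * w ℓ)) ^ 2 ≤ ε ^ 2 * ∑ ℓ, M ℓ * w ℓ :=
    hcs.trans (mul_le_mul_of_nonneg_right hconstraint hwork)
  rw [inv_pow, inv_mul_le_iff₀ (by positivity)]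
  linarith
end

section
/- Let L ≥ 0, let v_0, …, v_L and w_0, …, w_L be positive real numbers, let ε > 0, and set S := ∑_{k=0}^L √(v_k·w_k). Define the optimal sample numbers M_ℓ := ε^{−2} · √(v_ℓ/w_ℓ) · S for ℓ = 0, …, L. Then these M_ℓ satisfy the constraint exactly, ∑_{ℓ=0}^L v_ℓ/M_ℓ = ε², and achieve total work ∑_{ℓ=0}^L M_ℓ·w_ℓ = ε^{−2}·S², which is the minimum possible among all positive M_0, …, M_L with ∑_{ℓ=0}^L v_ℓ/M_ℓ ≤ ε². -/
private lemma sqrt_div_mul {a b : ℝ} (ha : 0 < a) (hb : 0 < b) :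
    Real.sqrt (a / b) * b = Real.sqrt (a * b) := by
  rw [show a / b = a * b / b ^ 2 by field_simp, Real.sqrt_div' _ (by positivity),
    Real.sqrt_sq hb.le]
  field_simp

private lemma div_sqrt_div {a b : ℝ} (ha : 0 < a) (hb : 0 < b) :
    a / Real.sqrt (a / b) = Real.sqrt (a * b) := by
  have h : Real.sqrt a ≠ 0 := (Real.sqrt_pos.2 ha).ne'
  rw [Real.sqrt_div ha.le, Real.sqrt_mul ha.le, div_div_eq_mul_div]
  nth_rewrite 1 [← Real.mul_self_sqrt ha.le]
  field_simp

/-- **Optimality of the multilevel Monte Carlo sample numbers.**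
With `S := ∑ k, √(v k · w k)`, the sample numbers `M ℓ := ε⁻² · √(v ℓ / w ℓ) · S`
satisfy the sampling-error constraint exactly, `∑ ℓ, v ℓ / M ℓ = ε²`, achieve total
work `∑ ℓ, M ℓ · w ℓ = ε⁻² · S²`, and this work is minimal among all positive sample
numbers satisfying `∑ ℓ, v ℓ / M ℓ ≤ ε²`. -/
theorem mlmc_optimal_samples
    (L : ℕ) (v w : Fin (L + 1) → ℝ)
    (hv : ∀ ℓ, 0 < v ℓ) (hw : ∀ ℓ, 0 < w ℓ)
    (ε : ℝ) (hε : 0 < ε)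
    (S : ℝ) (hS : S = ∑ k, Real.sqrt (v k * w k))
    (M : Fin (L + 1) → ℝ)
    (hMdef : ∀ ℓ, M ℓ = ε⁻¹ ^ 2 * Real.sqrt (v ℓ / w ℓ) * S) :
    (∑ ℓ, v ℓ / M ℓ = ε ^ 2) ∧
    (∑ ℓ, M ℓ * w ℓ = ε⁻¹ ^ 2 * S ^ 2) ∧
    (∀ M' : Fin (L + 1) → ℝ, (∀ ℓ, 0 < M' ℓ) → ∑ ℓ, v ℓ / M' ℓ ≤ ε ^ 2 →
      ∑ ℓ, M ℓ * w ℓ ≤ ∑ ℓ, M' ℓ * w ℓ) := by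
  have hSpos : 0 < S := by
    rw [hS]
    exact Finset.sum_pos (fun k _ => Real.sqrt_pos.2 (mul_pos (hv k) (hw k)))
      ⟨0, Finset.mem_univ 0⟩
  have hwork : ∑ ℓ, M ℓ * w ℓ = ε⁻¹ ^ 2 * S ^ 2 := by
    have : ∀ ℓ, M ℓ * w ℓ = ε⁻¹ ^ 2 * S * Real.sqrt (v ℓ * w ℓ) := by
      intro ℓ
      rw [hMdef ℓ, ← sqrt_div_mul (hv ℓ) (hw ℓ)]
      ring
    rw [Finset.sum_congr rfl (fun ℓ _ => this ℓ), ← Finset.mul_sum, ← hS]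
    ring
  refine ⟨?_, hwork, ?_⟩
  · have : ∀ ℓ, v ℓ / M ℓ = ε ^ 2 / S * Real.sqrt (v ℓ * w ℓ) := by
      intro ℓ
      have hsq : 0 < Real.sqrt (v ℓ / w ℓ) := Real.sqrt_pos.2 (div_pos (hv ℓ) (hw ℓ))
      rw [hMdef ℓ]
      rw [div_eq_iff (by positivity)]
      rw [show ε ^ 2 / S * Real.sqrt (v ℓ * w ℓ) * (ε⁻¹ ^ 2 * Real.sqrt (v ℓ / w ℓ) * S)
          = Real.sqrt (v ℓ * w ℓ) * Real.sqrt (v ℓ / w ℓ) * (ε ^ 2 * ε⁻¹ ^ 2) * (S / S) by ring]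
      rw [div_self hSpos.ne', ← div_sqrt_div (hv ℓ) (hw ℓ)]
      field_simp
    rw [Finset.sum_congr rfl (fun ℓ _ => this ℓ), ← Finset.mul_sum, ← hS]
    field_simp
  · intro M' hM' hcon
    have key : S ^ 2 ≤ (∑ ℓ, v ℓ / M' ℓ) * ∑ ℓ, M' ℓ * w ℓ := by
      have := Finset.sum_mul_sq_le_sq_mul_sq Finset.univ
        (fun ℓ => Real.sqrt (v ℓ / M' ℓ)) (fun ℓ => Real.sqrt (M' ℓ * w ℓ))
      have h1 : ∀ ℓ : Fin (L+1), Real.sqrt (v ℓ / M' ℓ) * Real.sqrt (M' ℓ * w ℓ)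
          = Real.sqrt (v ℓ * w ℓ) := by
        intro ℓ
        rw [← Real.sqrt_mul (div_pos (hv ℓ) (hM' ℓ)).le]
        congr 1
        field_simp [(hM' ℓ).ne']
      have h2 : ∀ ℓ : Fin (L+1), Real.sqrt (v ℓ / M' ℓ) ^ 2 = v ℓ / M' ℓ := fun ℓ =>
        Real.sq_sqrt (div_pos (hv ℓ) (hM' ℓ)).le
      have h3 : ∀ ℓ : Fin (L+1), Real.sqrt (M' ℓ * w ℓ) ^ 2 = M' ℓ * w ℓ := fun ℓ =>
        Real.sq_sqrt (mul_pos (hM' ℓ) (hw ℓ)).le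
      simp only [Finset.sum_congr rfl (fun ℓ _ => h1 ℓ)] at this
      calc S ^ 2 = (∑ ℓ, Real.sqrt (v ℓ * w ℓ)) ^ 2 := by rw [hS]
        _ ≤ (∑ ℓ, Real.sqrt (v ℓ / M' ℓ) ^ 2) * ∑ ℓ, Real.sqrt (M' ℓ * w ℓ) ^ 2 := this
        _ = (∑ ℓ, v ℓ / M' ℓ) * ∑ ℓ, M' ℓ * w ℓ := by
            rw [Finset.sum_congr rfl (fun ℓ _ => h2 ℓ), Finset.sum_congr rfl (fun ℓ _ => h3 ℓ)]
    have hW : 0 ≤ ∑ ℓ, M' ℓ * w ℓ :=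
      Finset.sum_nonneg fun ℓ _ => (mul_pos (hM' ℓ) (hw ℓ)).le
    have : S ^ 2 ≤ ε ^ 2 * ∑ ℓ, M' ℓ * w ℓ :=
      key.trans (mul_le_mul_of_nonneg_right hcon hW)
    rw [hwork]
    rw [inv_pow, inv_mul_le_iff₀ (by positivity)]
    linarith [this]
end

section
/- Multilevel complexity theorem, polynomial cost case. Let η > 1, 0 < ε_0 ≤ 1, and define ε_ℓ := η^{−ℓ}·ε_0 for ℓ = 0, 1, 2, …. Let s > 0 and γ > 0 with 2s > γ, and let c_v, c_w > 0. Suppose for every L ≥ 0 the level variances and costs satisfy 0 < v_ℓ ≤ c_v·ε_ℓ^{2s} and 0 < w_ℓ ≤ c_w·ε_ℓ^{−γ} for ℓ = 0, …, L, and define the optimal sample numbers M_ℓ := ε_L^{−2}·√(v_ℓ/w_ℓ)·∑_{k=0}^L √(v_k·w_k). Then there exists a constant C > 0, depending only on η, s, γ, c_v, c_w and ε_0 but NOT on L, such that the expected total work satisfies W_tot := ∑_{ℓ=0}^L M_ℓ·w_ℓ ≤ C·ε_L^{−2}, while the sampling error satisfies ∑_{ℓ=0}^L v_ℓ/M_ℓ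 = ε_L². Consequently the total error e_tot = O(ε_L) satisfies the optimal rate e_tot = O(W_tot^{−1/2}). -/
/-- Geometric sum bound. -/
lemma mlmc_geom_sum_le {r : ℝ} (h0 : 0 ≤ r) (h1 : r < 1) (n : ℕ) :
    ∑ i ∈ Finset.range n, r ^ i ≤ 1 / (1 - r) := by
  have hr : r ≠ 1 := ne_of_lt h1
  have h1r : (0:ℝ) < 1 - r := by linarith
  have hmul : (∑ i ∈ Finset.range n, r ^ i) * (1 - r) = 1 - r ^ n := by
    linear_combination -(geom_sum_mul r n)
  rw [le_div_iff₀ h1r, hmul]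
  nlinarith [pow_nonneg h0 n]

/-- **Multilevel complexity theorem, polynomial cost case.**
With level widths `ε_ℓ = η^(−ℓ)·ε₀`, level variances `v ℓ ≤ c_v·ε_ℓ^(2s)` and costs
`w ℓ ≤ c_w·ε_ℓ^(−γ)` where `2s > γ > 0`, the optimal sample numbers
`M ℓ = ε_L⁻²·√(v ℓ / w ℓ)·∑ k, √(v k · w k)` give a total work `W_tot ≤ C·ε_L⁻²`
with `C` independent of `L`, sampling error exactly `ε_L²`, and hence the optimal
rate `ε_L ≤ √C · W_tot^(−1/2)`. -/
theorem mlmc_complexity_polynomial_cost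
    (η ε₀ s γ cv cw : ℝ)
    (hη : 1 < η) (hε₀ : 0 < ε₀) (hε₀1 : ε₀ ≤ 1)
    (hs : 0 < s) (hγ : 0 < γ) (h2s : γ < 2 * s) (hcv : 0 < cv) (hcw : 0 < cw) :
    ∃ C > (0 : ℝ), ∀ L : ℕ, ∀ v w : Fin (L + 1) → ℝ,
      (∀ ℓ : Fin (L + 1), 0 < v ℓ ∧
        v ℓ ≤ cv * (η ^ (-((ℓ : ℕ) : ℝ)) * ε₀) ^ (2 * s)) →
      (∀ ℓ : Fin (L + 1), 0 < w ℓ ∧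
        w ℓ ≤ cw * (η ^ (-((ℓ : ℕ) : ℝ)) * ε₀) ^ (-γ)) →
      (let εL : ℝ := η ^ (-(L : ℝ)) * ε₀
       let M : Fin (L + 1) → ℝ :=
         fun ℓ => εL⁻¹ ^ 2 * Real.sqrt (v ℓ / w ℓ) * ∑ k, Real.sqrt (v k * w k)
       (∑ ℓ, M ℓ * w ℓ ≤ C * εL⁻¹ ^ 2) ∧
       (∑ ℓ, v ℓ / M ℓ = εL ^ 2) ∧
       (εL ≤ Real.sqrt C * (∑ ℓ, M ℓ * w ℓ) ^ (-(1 / 2 : ℝ)))) := by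
  have hη0 : (0 : ℝ) < η := lt_trans one_pos hη
  set σ : ℝ := s - γ / 2 with hσdef
  have hσ : 0 < σ := by simp only [hσdef]; linarith
  set r : ℝ := η ^ (-σ) with hrdef
  have hr0 : 0 < r := Real.rpow_pos_of_pos hη0 _
  have hr1 : r < 1 := Real.rpow_lt_one_of_one_lt_of_neg hη (by linarith)
  set A : ℝ := Real.sqrt (cv * cw) * ε₀ ^ σ * (1 / (1 - r)) with hAdef
  have hA : 0 < A := by
    apply mul_pos (mul_pos (Real.sqrt_pos.mpr (mul_pos hcv hcw))
      (Real.rpow_pos_of_pos hε₀ _))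
    have h1r : (0:ℝ) < 1 - r := by linarith
    positivity
  refine ⟨A ^ 2, by positivity, ?_⟩
  intro L v w hv hw
  intro εL M
  have hεL : 0 < εL := mul_pos (Real.rpow_pos_of_pos hη0 _) hε₀
  -- ε_ℓ positive
  have hεℓ : ∀ ℓ : Fin (L + 1), (0:ℝ) < η ^ (-((ℓ : ℕ) : ℝ)) * ε₀ :=
    fun ℓ => mul_pos (Real.rpow_pos_of_pos hη0 _) hε₀
  -- key bound on sqrt(v*w)
  have key : ∀ ℓ : Fin (L + 1),
      Real.sqrt (v ℓ * w ℓ) ≤ Real.sqrt (cv * cw) * ε₀ ^ σ * r ^ (ℓ : ℕ) := by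
    intro ℓ
    set ε : ℝ := η ^ (-((ℓ : ℕ) : ℝ)) * ε₀ with hεdef
    have hε : 0 < ε := hεℓ ℓ
    have h1 : v ℓ * w ℓ ≤ (cv * cw) * ε ^ (2 * σ) := by
      have := (hv ℓ).2
      have := (hw ℓ).2
      have hvw : v ℓ * w ℓ ≤ (cv * ε ^ (2 * s)) * (cw * ε ^ (-γ)) :=
        mul_le_mul (hv ℓ).2 (hw ℓ).2 (le_of_lt (hw ℓ).1)
          (le_of_lt (mul_pos hcv (Real.rpow_pos_of_pos hε _)))
      calc v ℓ * w ℓ ≤ (cv * ε ^ (2 * s)) * (cw * ε ^ (-γ)) := hvw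
        _ = (cv * cw) * (ε ^ (2 * s) * ε ^ (-γ)) := by ring
        _ = (cv * cw) * ε ^ (2 * σ) := by
            rw [← Real.rpow_add hε, hσdef]; ring_nf
    calc Real.sqrt (v ℓ * w ℓ) ≤ Real.sqrt ((cv * cw) * ε ^ (2 * σ)) :=
          Real.sqrt_le_sqrt h1
      _ = Real.sqrt (cv * cw) * ε ^ σ := by
          rw [Real.sqrt_mul (le_of_lt (mul_pos hcv hcw)),
            Real.sqrt_eq_rpow (ε ^ (2 * σ)), ← Real.rpow_mul hε.le]
          congr 1
          ring
      _ = Real.sqrt (cv * cw) * ε₀ ^ σ * r ^ (ℓ : ℕ) := by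
          rw [hεdef, Real.mul_rpow (Real.rpow_pos_of_pos hη0 _).le hε₀.le,
            hrdef, ← Real.rpow_natCast (η ^ (-σ)) (ℓ : ℕ), ← Real.rpow_mul hη0.le,
            ← Real.rpow_mul hη0.le]
          ring_nf
  -- sum bound
  set S : ℝ := ∑ k, Real.sqrt (v k * w k) with hSdef
  have hSpos : 0 < S := Finset.sum_pos (fun k _ => Real.sqrt_pos.mpr
    (mul_pos (hv k).1 (hw k).1)) Finset.univ_nonempty
  have hSA : S ≤ A := by
    calc S ≤ ∑ ℓ : Fin (L + 1), Real.sqrt (cv * cw) * ε₀ ^ σ * r ^ (ℓ : ℕ) :=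
          Finset.sum_le_sum (fun ℓ _ => key ℓ)
      _ = Real.sqrt (cv * cw) * ε₀ ^ σ * ∑ ℓ : Fin (L + 1), r ^ (ℓ : ℕ) := by
          rw [Finset.mul_sum]
      _ ≤ Real.sqrt (cv * cw) * ε₀ ^ σ * (1 / (1 - r)) := by
          apply mul_le_mul_of_nonneg_left _ (by positivity)
          rw [Fin.sum_univ_eq_sum_range (fun i => r ^ i)]
          exact mlmc_geom_sum_le hr0.le hr1 (L + 1)
      _ = A := rfl
  -- M ℓ * w ℓ = εL⁻¹^2 * sqrt(v*w) * S
  have hMw : ∀ ℓ : Fin (L + 1), M ℓ * w ℓ = εL⁻¹ ^ 2 * Real.sqrt (v ℓ * w ℓ) * S := by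
    intro ℓ
    have hvℓ := (hv ℓ).1
    have hwℓ := (hw ℓ).1
    have h : Real.sqrt (v ℓ / w ℓ) * w ℓ = Real.sqrt (v ℓ * w ℓ) := by
      rw [Real.sqrt_div hvℓ.le, Real.sqrt_mul hvℓ.le, div_mul_eq_mul_div, eq_comm,
        eq_div_iff (Real.sqrt_ne_zero'.mpr hwℓ)]
      linear_combination Real.sqrt (v ℓ) * Real.mul_self_sqrt hwℓ.le
    show εL⁻¹ ^ 2 * Real.sqrt (v ℓ / w ℓ) * S * w ℓ = _
    rw [mul_right_comm, mul_assoc (εL⁻¹ ^ 2), h]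
  have hW : ∑ ℓ, M ℓ * w ℓ = εL⁻¹ ^ 2 * S ^ 2 := by
    simp only [hMw]
    rw [← Finset.sum_mul, ← Finset.mul_sum, ← hSdef]
    ring
  have hWle : ∑ ℓ, M ℓ * w ℓ ≤ A ^ 2 * εL⁻¹ ^ 2 := by
    rw [hW]
    have : S ^ 2 ≤ A ^ 2 := pow_le_pow_left₀ hSpos.le hSA 2
    nlinarith [sq_nonneg εL⁻¹]
  refine ⟨hWle, ?_, ?_⟩
  · -- sampling error
    have hvM : ∀ ℓ : Fin (L + 1), v ℓ / M ℓ = εL ^ 2 * Real.sqrt (v ℓ * w ℓ) / S := by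
      intro ℓ
      have hvℓ := (hv ℓ).1
      have hwℓ := (hw ℓ).1
      have hsq : Real.sqrt (v ℓ / w ℓ) > 0 := Real.sqrt_pos.mpr (div_pos hvℓ hwℓ)
      have h : v ℓ / Real.sqrt (v ℓ / w ℓ) = Real.sqrt (v ℓ * w ℓ) := by
        rw [Real.sqrt_div hvℓ.le, Real.sqrt_mul hvℓ.le, div_div_eq_mul_div,
          div_eq_iff (Real.sqrt_ne_zero'.mpr hvℓ)]
        nlinarith [Real.mul_self_sqrt hvℓ.le, Real.sqrt_nonneg (w ℓ), Real.sqrt_nonneg (v ℓ)]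
      show v ℓ / (εL⁻¹ ^ 2 * Real.sqrt (v ℓ / w ℓ) * S) = _
      rw [← h]
      field_simp
    simp only [hvM]
    rw [← Finset.sum_div, ← Finset.mul_sum, ← hSdef, mul_div_assoc,
      div_self hSpos.ne', mul_one]
  · -- optimal rate
    set W : ℝ := ∑ ℓ, M ℓ * w ℓ with hWdef
    have hWpos : 0 < W := by rw [hW]; positivity
    have hWC : W ≤ A ^ 2 * εL⁻¹ ^ 2 := hWle
    have hrw : W ^ (-(1 / 2 : ℝ)) = (Real.sqrt W)⁻¹ := by
      rw [Real.rpow_neg hWpos.le, Real.sqrt_eq_rpow]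
    rw [hrw, Real.sqrt_sq hA.le, ← div_eq_mul_inv,
      le_div_iff₀ (Real.sqrt_pos.mpr hWpos)]
    have hsW : Real.sqrt W ≤ A * εL⁻¹ := by
      calc Real.sqrt W ≤ Real.sqrt (A ^ 2 * εL⁻¹ ^ 2) := Real.sqrt_le_sqrt hWC
        _ = A * εL⁻¹ := by
            rw [show A ^ 2 * εL⁻¹ ^ 2 = (A * εL⁻¹) ^ 2 by ring,
              Real.sqrt_sq (by positivity)]
    calc εL * Real.sqrt W ≤ εL * (A * εL⁻¹) :=
          mul_le_mul_of_nonneg_left hsW hεL.le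
      _ = A := by field_simp
end

section
/- Multilevel complexity theorem, logarithmic cost case. Let η > 1, 0 < ε_0 ≤ 1, and define ε_ℓ := η^{−ℓ}·ε_0 for ℓ = 0, 1, 2, …. Let s > 0, p ≥ 0, and c_v, c_w > 0. Suppose for every L ≥ 0 the level variances and costs satisfy 0 < v_ℓ ≤ c_v·ε_ℓ^{2s} and 0 < w_ℓ ≤ c_w·(ℓ+1)^p for ℓ = 0, …, L, and define the optimal sample numbers M_ℓ := ε_L^{−2}·√(v_ℓ/w_ℓ)·∑_{k=0}^L √(v_k·w_k). Then there exists a constant C > 0, depending only on η, s, p, c_v, c_w and ε_0 but NOT on L, such that the expected total work satisfies W_tot := ∑_{ℓ=0}^L M_ℓ·w_ℓ ≤ C·ε_L^{−2}. Consequently the total error e_tot = O(ε_L) satisfies the optimal rate e_tot = O(W_tot^{−1/2}). -/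
set_option maxHeartbeats 1000000


/-- **Multilevel complexity theorem, logarithmic cost case.**
With level widths `ε_ℓ = η^(−ℓ)·ε₀`, level variances `v ℓ ≤ c_v·ε_ℓ^(2s)` and costs
`w ℓ ≤ c_w·(ℓ+1)^p` (corresponding to `O(log^p(ε_ℓ⁻¹))`), the optimal sample numbers
`M ℓ = ε_L⁻²·√(v ℓ / w ℓ)·∑ k, √(v k · w k)` give a total work `W_tot ≤ C·ε_L⁻²`
with `C` independent of `L`, and hence the optimal rate `ε_L ≤ √C · W_tot^(−1/2)`. -/
theorem mlmc_complexity_logarithmic_cost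
    (η ε₀ s p cv cw : ℝ)
    (hη : 1 < η) (hε₀ : 0 < ε₀) (hε₀1 : ε₀ ≤ 1)
    (hs : 0 < s) (hp : 0 ≤ p) (hcv : 0 < cv) (hcw : 0 < cw) :
    ∃ C > (0 : ℝ), ∀ L : ℕ, ∀ v w : Fin (L + 1) → ℝ,
      (∀ ℓ : Fin (L + 1), 0 < v ℓ ∧
        v ℓ ≤ cv * (η ^ (-((ℓ : ℕ) : ℝ)) * ε₀) ^ (2 * s)) →
      (∀ ℓ : Fin (L + 1), 0 < w ℓ ∧
        w ℓ ≤ cw * (((ℓ : ℕ) : ℝ) + 1) ^ p) →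
      (let εL : ℝ := η ^ (-(L : ℝ)) * ε₀
       let M : Fin (L + 1) → ℝ :=
         fun ℓ => εL⁻¹ ^ 2 * Real.sqrt (v ℓ / w ℓ) * ∑ k, Real.sqrt (v k * w k)
       (∑ ℓ, M ℓ * w ℓ ≤ C * εL⁻¹ ^ 2) ∧
       (εL ≤ Real.sqrt C * (∑ ℓ, M ℓ * w ℓ) ^ (-(1 / 2 : ℝ)))) := by
  have hη0 : (0 : ℝ) < η := lt_trans one_pos hη
  set r : ℝ := η ^ (-s) with hr_def
  have hr0 : 0 < r := Real.rpow_pos_of_pos hη0 _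
  have hr1 : r < 1 := Real.rpow_lt_one_of_one_lt_of_neg hη (by linarith)
  set n : ℕ := ⌈p / 2⌉₊ with hn_def
  -- summability of the majorant
  have hsum : Summable (fun k : ℕ => ((k : ℝ) + 1) ^ n * r ^ k) := by
    have h1 : Summable (fun m : ℕ => (m : ℝ) ^ n * r ^ m) :=
      summable_pow_mul_geometric_of_norm_lt_one n
        (by rw [Real.norm_eq_abs, abs_of_pos hr0]; exact hr1)
    have h2 : Summable (fun k : ℕ => ((k + 1 : ℕ) : ℝ) ^ n * r ^ (k + 1)) :=
      (summable_nat_add_iff 1).2 h1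
    have h3 : Summable (fun k : ℕ => r⁻¹ * (((k + 1 : ℕ) : ℝ) ^ n * r ^ (k + 1))) :=
      h2.mul_left _
    refine h3.congr fun k => ?_
    push_cast
    rw [pow_succ, inv_mul_eq_div, div_eq_iff hr0.ne']
    ring
  set T : ℝ := ∑' k : ℕ, ((k : ℝ) + 1) ^ n * r ^ k with hT_def
  have hT0 : 0 ≤ T := tsum_nonneg fun k => by positivity
  set D : ℝ := Real.sqrt (cv * cw) * T with hD_def
  have hD0 : 0 ≤ D := mul_nonneg (Real.sqrt_nonneg _) hT0
  refine ⟨(D + 1) ^ 2, by positivity, ?_⟩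
  intro L v w hv hw
  intro εL M
  have hεL : 0 < εL := mul_pos (Real.rpow_pos_of_pos hη0 _) hε₀
  set S : ℝ := ∑ k : Fin (L + 1), Real.sqrt (v k * w k) with hS_def
  have hS0 : 0 < S := Finset.sum_pos
    (fun k _ => Real.sqrt_pos.2 (mul_pos (hv k).1 (hw k).1)) ⟨⟨0, Nat.succ_pos L⟩, Finset.mem_univ _⟩
  -- total work identity
  have key : ∀ ℓ : Fin (L + 1), Real.sqrt (v ℓ / w ℓ) * w ℓ = Real.sqrt (v ℓ * w ℓ) := by
    intro ℓ
    have hwℓ : 0 < w ℓ := (hw ℓ).1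
    calc Real.sqrt (v ℓ / w ℓ) * w ℓ
        = Real.sqrt (v ℓ / w ℓ) * Real.sqrt ((w ℓ) ^ 2) := by rw [Real.sqrt_sq hwℓ.le]
      _ = Real.sqrt (v ℓ / w ℓ * (w ℓ) ^ 2) := by
          rw [← Real.sqrt_mul (div_nonneg (hv ℓ).1.le (hw ℓ).1.le)]
      _ = Real.sqrt (v ℓ * w ℓ) := by
          congr 1
          field_simp
  have hW : ∑ ℓ, M ℓ * w ℓ = εL⁻¹ ^ 2 * (S * S) := by
    have hterm' : ∀ ℓ : Fin (L + 1), M ℓ * w ℓ = εL⁻¹ ^ 2 * S * Real.sqrt (v ℓ * w ℓ) := by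
      intro ℓ
      show εL⁻¹ ^ 2 * Real.sqrt (v ℓ / w ℓ) * S * w ℓ = _
      rw [show εL⁻¹ ^ 2 * Real.sqrt (v ℓ / w ℓ) * S * w ℓ
          = εL⁻¹ ^ 2 * S * (Real.sqrt (v ℓ / w ℓ) * w ℓ) from by ring, key ℓ]
    rw [Finset.sum_congr rfl fun ℓ _ => hterm' ℓ, ← Finset.mul_sum, ← hS_def]
    ring
  -- termwise bound on sqrt (v k * w k)
  have hterm : ∀ k : Fin (L + 1),
      Real.sqrt (v k * w k) ≤ Real.sqrt (cv * cw) * (((k : ℕ) : ℝ) + 1) ^ n * r ^ (k : ℕ) := by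
    intro k
    set A : ℝ := Real.sqrt (cv * cw) * (η ^ (-((k : ℕ) : ℝ)) * ε₀) ^ s
        * (((k : ℕ) : ℝ) + 1) ^ (p / 2 : ℝ) with hA_def
    have hbase : 0 < η ^ (-((k : ℕ) : ℝ)) * ε₀ :=
      mul_pos (Real.rpow_pos_of_pos hη0 _) hε₀
    have hA0 : 0 ≤ A := by positivity
    have hA2 : A ^ 2 = (cv * (η ^ (-((k : ℕ) : ℝ)) * ε₀) ^ (2 * s))
        * (cw * (((k : ℕ) : ℝ) + 1) ^ p) := by
      have e1 : ((η ^ (-((k : ℕ) : ℝ)) * ε₀) ^ s) ^ 2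
          = (η ^ (-((k : ℕ) : ℝ)) * ε₀) ^ (2 * s) := by
        rw [← Real.rpow_natCast ((η ^ (-((k : ℕ) : ℝ)) * ε₀) ^ s) 2,
          ← Real.rpow_mul hbase.le]
        norm_num [mul_comm]
      have e2 : ((((k : ℕ) : ℝ) + 1) ^ (p / 2 : ℝ)) ^ 2 = (((k : ℕ) : ℝ) + 1) ^ p := by
        have h1 : (0:ℝ) ≤ ((k : ℕ) : ℝ) + 1 := by positivity
        rw [← Real.rpow_natCast ((((k : ℕ) : ℝ) + 1) ^ (p / 2 : ℝ)) 2,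
          ← Real.rpow_mul h1]
        norm_num
      have e3 : Real.sqrt (cv * cw) ^ 2 = cv * cw := Real.sq_sqrt (by positivity)
      rw [hA_def, mul_pow, mul_pow, e1, e2, e3]; ring
    have hle : v k * w k ≤ A ^ 2 := by
      rw [hA2]
      exact mul_le_mul (hv k).2 (hw k).2 (hw k).1.le (by positivity)
    calc Real.sqrt (v k * w k) ≤ Real.sqrt (A ^ 2) := Real.sqrt_le_sqrt hle
      _ = A := by rw [Real.sqrt_sq hA0]
      _ ≤ Real.sqrt (cv * cw) * (((k : ℕ) : ℝ) + 1) ^ n * r ^ (k : ℕ) := by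
          have e4 : (η ^ (-((k : ℕ) : ℝ)) * ε₀) ^ s = r ^ (k : ℕ) * ε₀ ^ s := by
            rw [Real.mul_rpow (Real.rpow_pos_of_pos hη0 _).le hε₀.le,
              ← Real.rpow_natCast r (k : ℕ), hr_def, ← Real.rpow_mul hη0.le,
              ← Real.rpow_mul hη0.le]
            ring_nf
          have e5 : ε₀ ^ s ≤ 1 := Real.rpow_le_one hε₀.le hε₀1 hs.le
          have e6 : (((k : ℕ) : ℝ) + 1) ^ (p / 2 : ℝ) ≤ (((k : ℕ) : ℝ) + 1) ^ n := by
            rw [← Real.rpow_natCast (((k : ℕ) : ℝ) + 1) n]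
            refine Real.rpow_le_rpow_of_exponent_le ?_ (Nat.le_ceil _)
            have : (0:ℝ) ≤ ((k : ℕ) : ℝ) := Nat.cast_nonneg _
            linarith
          rw [hA_def, e4]
          calc Real.sqrt (cv * cw) * (r ^ (k : ℕ) * ε₀ ^ s) * (((k : ℕ) : ℝ) + 1) ^ (p / 2 : ℝ)
              ≤ Real.sqrt (cv * cw) * (r ^ (k : ℕ) * 1) * (((k : ℕ) : ℝ) + 1) ^ n := by
                gcongr <;> positivity
            _ = Real.sqrt (cv * cw) * (((k : ℕ) : ℝ) + 1) ^ n * r ^ (k : ℕ) := by ring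
  -- S ≤ D
  have hSD : S ≤ D := by
    calc S ≤ ∑ k : Fin (L + 1), Real.sqrt (cv * cw) * (((k : ℕ) : ℝ) + 1) ^ n * r ^ (k : ℕ) :=
          Finset.sum_le_sum fun k _ => hterm k
      _ = ∑ k ∈ Finset.range (L + 1), Real.sqrt (cv * cw) * (((k : ℕ) : ℝ) + 1) ^ n * r ^ k := by
          exact Fin.sum_univ_eq_sum_range
            (fun k : ℕ => Real.sqrt (cv * cw) * ((k : ℝ) + 1) ^ n * r ^ k) (L + 1)
      _ = Real.sqrt (cv * cw) * ∑ k ∈ Finset.range (L + 1), (((k : ℕ) : ℝ) + 1) ^ n * r ^ k := by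
          rw [Finset.mul_sum]; congr 1; ext k; ring
      _ ≤ Real.sqrt (cv * cw) * T := by
          gcongr
          exact Summable.sum_le_tsum _ (fun k _ => by positivity) hsum
      _ = D := rfl
  have hSC : S ≤ D + 1 := by linarith
  constructor
  · rw [hW]
    have : S * S ≤ (D + 1) ^ 2 := by nlinarith
    nlinarith [sq_nonneg εL⁻¹, this, mul_le_mul_of_nonneg_left this (sq_nonneg εL⁻¹)]
  · rw [hW]
    have hsqC : Real.sqrt ((D + 1) ^ 2) = D + 1 := Real.sqrt_sq (by linarith)
    rw [hsqC]
    have hWpos : 0 < εL⁻¹ ^ 2 * (S * S) := by positivity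
    rw [Real.rpow_neg hWpos.le]
    have h12 : (εL⁻¹ ^ 2 * (S * S)) ^ ((1 : ℝ) / 2) = εL⁻¹ * S := by
      rw [← Real.sqrt_eq_rpow,
        show εL⁻¹ ^ 2 * (S * S) = (εL⁻¹ * S) ^ 2 from by ring,
        Real.sqrt_sq (by positivity)]
    rw [h12, mul_inv, inv_inv,
      show (D + 1) * (εL * S⁻¹) = (D + 1) * εL / S from by ring,
      le_div_iff₀ hS0]
    nlinarith [mul_le_mul_of_nonneg_left hSC hεL.le]
end
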